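/- Fix a word P over a complementary alphabet admitting at least one P-valid plane tree. In the directed graph G_P^+ whose vertices are P-valid plane trees and whose directed edges are valid type 2 local moves, the greedy tree T₀ is the unique sink, and from every P-valid plane tree there is a directed path of type 2 moves to T₀. -/

import Mathlib

/-!
Model: a plane tree with n edges is encoded as a non-crossing perfect matching
on the 2n half-edge positions 0,…,2n-1 (0-indexed); a matched pair (i,j) with
i < j is the edge e(i,j) with left half-edge i and right half-edge j.
-/

/-- `M` is a perfect matching on positions `0,…,2n-1`. -/
def IsMatching (n : ℕ) (M : Finset (ℕ × ℕ)) : Prop :=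
  (∀ p ∈ M, p.1 < p.2 ∧ p.2 < 2 * n) ∧
  (∀ k, k < 2 * n → ∃! p, p ∈ M ∧ (p.1 = k ∨ p.2 = k))

/-- No two matched pairs cross. -/
def NonCrossing (M : Finset (ℕ × ℕ)) : Prop :=
  ∀ p ∈ M, ∀ q ∈ M, ¬ (p.1 < q.1 ∧ q.1 < p.2 ∧ p.2 < q.2)

/-- A plane tree on `n` edges: a non-crossing perfect matching on `0,…,2n-1`. -/
def IsPlaneTree (n : ℕ) (M : Finset (ℕ × ℕ)) : Prop :=
  IsMatching n M ∧ NonCrossing M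

/-- The plane tree `M` is valid for the word `P` (with complementation `comp`):
every matched pair consists of complementary letters. -/
def IsValid {A : Type*} (P : ℕ → A) (comp : A → A) (M : Finset (ℕ × ℕ)) : Prop :=
  ∀ p ∈ M, P p.2 = comp (P p.1)

/-- One pass of the greedy algorithm over positions `0,…,N-1`:
state is (stack of currently unmatched positions, most recent first;
list of matched pairs `(j,i)` with `j < i`). At each position `i`, if the most
recent unmatched position `j` carries a complementary letter, match `(j,i)`;
otherwise leave `i` unmatched. -/
def greedy {A : Type*} [DecidableEq A] (P : ℕ → A) (comp : A → A) :
    ℕ → List ℕ × List (ℕ × ℕ)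
  | 0 => ([], [])
  | (i+1) =>
    let s := greedy P comp i
    match s.1 with
    | [] => ([i], s.2)
    | j :: rest =>
      if P i = comp (P j) then (rest, (j, i) :: s.2)
      else (i :: j :: rest, s.2)

/-- The partial matching produced by the greedy algorithm on a word of length `2n`. -/
def greedyMatching {A : Type*} [DecidableEq A] (P : ℕ → A) (comp : A → A) (n : ℕ) :
    Finset (ℕ × ℕ) :=
  ((greedy P comp (2 * n)).2).toFinset

/-- A local move of type 2: two nested *adjacent* edges `e(i,j')`, `e(j,i')`
with `i < j < i' < j'` (adjacency: no edge lies strictly between them, i.e. no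
edge `(a,b)` with `i < a < j` and `i' < b < j'`) are replaced by `e(i,j)` and
`e(i',j')`. -/
def Type2Move (M M' : Finset (ℕ × ℕ)) : Prop :=
  ∃ i j i' j', i < j ∧ j < i' ∧ i' < j' ∧
    (i, j') ∈ M ∧ (j, i') ∈ M ∧
    (¬ ∃ q ∈ M, i < q.1 ∧ q.1 < j ∧ i' < q.2 ∧ q.2 < j') ∧
    M' = insert (i, j) (insert (i', j') ((M.erase (i, j')).erase (j, i')))

/-- A valid local move of type 2: a type 2 move whose initial and resulting
plane trees are both `P`-valid. -/
def ValidType2Move {A : Type*} (P : ℕ → A) (comp : A → A)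
    (M M' : Finset (ℕ × ℕ)) : Prop :=
  Type2Move M M' ∧ IsValid P comp M ∧ IsValid P comp M'

/-! ### Auxiliary development -/

section Aux

variable {A : Type*} [DecidableEq A] {P : ℕ → A} {comp : A → A} {n : ℕ}
  {M M' : Finset (ℕ × ℕ)}

/-- Uniqueness of the pair containing a given position. -/
lemma mem_uniq (hM : IsMatching n M) {p q : ℕ × ℕ} {k : ℕ}
    (hp : p ∈ M) (hq : q ∈ M) (hpk : p.1 = k ∨ p.2 = k) (hqk : q.1 = k ∨ q.2 = k) :
    p = q := by
  have hk : k < 2 * n := by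
    have h1 := hM.1 p hp
    rcases hpk with h | h <;> omega
  obtain ⟨r, _, hr⟩ := hM.2 k hk
  rw [hr p ⟨hp, hpk⟩, hr q ⟨hq, hqk⟩]

/-- The greedy property: no nested adjacent pair of edges can be validly re-matched. -/
def GP (P : ℕ → A) (comp : A → A) (M : Finset (ℕ × ℕ)) : Prop :=
  ∀ i j i' j', i < j → j < i' → i' < j' → (i, j') ∈ M → (j, i') ∈ M →
    (¬ ∃ q ∈ M, i < q.1 ∧ q.1 < j ∧ i' < q.2 ∧ q.2 < j') → P j ≠ comp (P i)

lemma gp_of_sink (hinv : Function.Involutive comp)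
    (h : ¬ ∃ M', ValidType2Move P comp M M') (hval : IsValid P comp M) :
    GP P comp M := by
  intro i j i' j' h1 h2 h3 hij' hji' hadj hPj
  apply h
  refine ⟨_, ⟨i, j, i', j', h1, h2, h3, hij', hji', hadj, rfl⟩, hval, ?_⟩
  intro p hp
  simp only [Finset.mem_insert] at hp
  rcases hp with rfl | rfl | hp
  · exact hPj
  · have h4 : P j' = comp (P i) := hval _ hij'
    have h5 : P i' = comp (P j) := hval _ hji'
    show P j' = comp (P i')
    rw [h4, h5, hinv, hPj]
  · exact hval _ (Finset.mem_of_mem_erase (Finset.mem_of_mem_erase hp))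

lemma sink_of_gp (hgp : GP P comp M) : ¬ ∃ M', ValidType2Move P comp M M' := by
  rintro ⟨M', ⟨i, j, i', j', h1, h2, h3, hij', hji', hadj, rfl⟩, hvalM, hvalM'⟩
  exact hgp i j i' j' h1 h2 h3 hij' hji' hadj (hvalM' (i, j) (by simp))

/-- The greedy simulation invariant. -/
lemma greedy_inv (hM : IsPlaneTree n M) (hval : IsValid P comp M) (hgp : GP P comp M) :
    ∀ t, t ≤ 2 * n →
      (greedy P comp t).1.Pairwise (· > ·) ∧
      (∀ k, k ∈ (greedy P comp t).1 ↔ k < t ∧ ∃ b, (k, b) ∈ M ∧ t ≤ b) ∧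
      (∀ p, p ∈ (greedy P comp t).2 ↔ p ∈ M ∧ p.2 < t) := by
  intro t
  induction t with
  | zero => simp [greedy]
  | succ t ih =>
    intro ht
    obtain ⟨ihs, ihS, ihL⟩ := ih (by omega)
    obtain ⟨p, ⟨hpM, hpk⟩, -⟩ := hM.1.2 t (by omega)
    have hpb := hM.1.1 p hpM
    obtain ⟨p1, b⟩ := p
    simp only at hpb hpk
    rcases hpk with hpk | hpk
    · -- t is a left endpoint: p = (t, b), b > t
      rw [hpk] at hpM hpb
      have hbt : t < b := hpb.1
      -- no pair of M has right endpoint t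
      have hnoright : ∀ q ∈ M, q.2 ≠ t := by
        intro q hq hq2
        have := mem_uniq hM.1 hq hpM (Or.inr hq2) (Or.inl rfl)
        subst this
        omega
      -- memberships after pushing t
      have hSnew : ∀ k, (k = t ∨ k ∈ (greedy P comp t).1) ↔
          (k < t + 1 ∧ ∃ c, (k, c) ∈ M ∧ t + 1 ≤ c) := by
        intro k
        constructor
        · rintro (rfl | hk)
          · exact ⟨by omega, b, hpM, by omega⟩
          · obtain ⟨hk1, c, hc, hc2⟩ := (ihS k).mp hk
            have : c ≠ t := fun h => hnoright _ hc h
            exact ⟨by omega, c, hc, by omega⟩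
        · rintro ⟨hk1, c, hc, hc2⟩
          rcases Nat.eq_or_lt_of_le (Nat.lt_succ_iff.mp hk1) with rfl | hk2
          · exact Or.inl rfl
          · exact Or.inr ((ihS k).mpr ⟨hk2, c, hc, by omega⟩)
      have hLnew : ∀ p, p ∈ (greedy P comp t).2 ↔ p ∈ M ∧ p.2 < t + 1 := by
        intro q
        rw [ihL q]
        constructor
        · rintro ⟨h1, h2⟩; exact ⟨h1, by omega⟩
        · rintro ⟨h1, h2⟩
          refine ⟨h1, ?_⟩
          have : q.2 ≠ t := hnoright q h1
          omega
      have hlt : ∀ k ∈ (greedy P comp t).1, k < t := fun k hk => ((ihS k).mp hk).1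
      rcases hS : (greedy P comp t).1 with - | ⟨j, rest⟩
      · -- empty stack: push
        refine ⟨?_, ?_, ?_⟩
        · simp [greedy, hS]
        · intro k
          have := hSnew k
          rw [hS] at this
          simp only [List.not_mem_nil, or_false] at this
          simp only [greedy, hS]
          simpa using this
        · intro q
          simp only [greedy, hS]
          exact hLnew q
      · -- nonempty stack: must not match
        have hjmem : j ∈ (greedy P comp t).1 := by rw [hS]; exact List.mem_cons_self
        obtain ⟨hjt, c, hjc, hct⟩ := (ihS j).mp hjmem
        have hc_ne : c ≠ t := hnoright _ hjc
        have hct' : t < c := by omega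
        have hbc : b < c := by
          have hnc := hM.2 (j, c) hjc (t, b) hpM
          simp only at hnc
          have : b ≠ c := by
            intro h; subst h
            have := mem_uniq hM.1 hjc hpM (Or.inr rfl) (Or.inr rfl)
            simp at this; omega
          omega
        have hadj : ¬ ∃ q ∈ M, j < q.1 ∧ q.1 < t ∧ b < q.2 ∧ q.2 < c := by
          rintro ⟨q, hq, hq1, hq2, hq3, hq4⟩
          have hqS : q.1 ∈ (greedy P comp t).1 :=
            (ihS q.1).mpr ⟨hq2, q.2, by simpa using hq, by omega⟩
          rw [hS, List.mem_cons] at hqS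
          rcases hqS with hqS | hqS
          · omega
          · have := ihs
            rw [hS] at this
            rw [List.pairwise_cons] at this
            have := this.1 _ hqS
            omega
        have hne : P t ≠ comp (P j) := hgp j t b c hjt hbt hbc hjc hpM hadj
        refine ⟨?_, ?_, ?_⟩
        · have := ihs; rw [hS] at this
          simp only [greedy, hS, hne, if_false]
          rw [List.pairwise_cons]
          refine ⟨?_, this⟩
          intro b hb
          rw [List.mem_cons] at hb
          rcases hb with rfl | hb
          · exact hjt
          · rw [List.pairwise_cons] at this
            have := this.1 _ hb
            omega
        · intro k
          have h1 := hSnew k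
          rw [hS] at h1
          simp only [greedy, hS, hne, if_false]
          simpa using h1
        · intro q
          simp only [greedy, hS, hne, if_false]
          exact hLnew q
    · -- t is a right endpoint: p = (a, t)
      rw [hpk] at hpM hpb
      have hat : p1 < t := hpb.1
      have haS : p1 ∈ (greedy P comp t).1 := (ihS p1).mpr ⟨hat, t, hpM, le_rfl⟩
      rcases hS : (greedy P comp t).1 with - | ⟨j, rest⟩
      · rw [hS] at haS; simp at haS
      · rw [hS, List.mem_cons] at haS
        have hsorted := ihs; rw [hS, List.pairwise_cons] at hsorted
        have hja : j = p1 := by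
          by_contra hne
          have haRest : p1 ∈ rest := by
            rcases haS with h | h
            · omega
            · exact h
          have hja' : p1 < j := hsorted.1 p1 haRest
          have hjmem : j ∈ (greedy P comp t).1 := by rw [hS]; exact List.mem_cons_self
          obtain ⟨hjt, c, hjc, hct⟩ := (ihS j).mp hjmem
          have hc_ne : c ≠ t := by
            intro h; subst h
            have := mem_uniq hM.1 hjc hpM (Or.inr rfl) (Or.inr rfl)
            simp at this; omega
          have hnc := hM.2 (p1, t) hpM (j, c) hjc
          simp only at hnc
          omega
        subst hja
        have hmatch : P t = comp (P j) := hval (j, t) hpM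
        refine ⟨?_, ?_, ?_⟩
        · simp only [greedy, hS, hmatch, if_true]
          exact hsorted.2
        · intro k
          simp only [greedy, hS, hmatch, if_true]
          constructor
          · intro hk
            have hkS : k ∈ (greedy P comp t).1 := by rw [hS]; exact List.mem_cons_of_mem _ hk
            obtain ⟨hk1, c, hc, hc2⟩ := (ihS k).mp hkS
            have hkj : k < j := hsorted.1 k hk
            have : c ≠ t := by
              intro h; subst h
              have := mem_uniq hM.1 hc hpM (Or.inr rfl) (Or.inr rfl)
              simp at this; omega
            exact ⟨by omega, c, hc, by omega⟩
          · rintro ⟨hk1, c, hc, hc2⟩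
            have hkt : k ≠ t := by
              intro h; subst h
              have := mem_uniq hM.1 hc hpM (Or.inl rfl) (Or.inr rfl)
              simp at this; omega
            have hkS : k ∈ (greedy P comp t).1 :=
              (ihS k).mpr ⟨by omega, c, hc, by omega⟩
            rw [hS, List.mem_cons] at hkS
            rcases hkS with h | h
            · exfalso
              subst h
              have := mem_uniq hM.1 hc hpM (Or.inl rfl) (Or.inl rfl)
              simp at this; omega
            · exact h
        · intro q
          simp only [greedy, hS, hmatch, if_true, List.mem_cons]
          constructor
          · rintro (rfl | hq)
            · exact ⟨hpM, by omega⟩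
            · obtain ⟨h1, h2⟩ := (ihL q).mp hq
              exact ⟨h1, by omega⟩
          · rintro ⟨h1, h2⟩
            rcases Nat.eq_or_lt_of_le (Nat.lt_succ_iff.mp h2) with h3 | h3
            · left
              have := mem_uniq hM.1 h1 hpM (Or.inr h3) (Or.inr rfl)
              exact this
            · right; exact (ihL q).mpr ⟨h1, h3⟩

lemma greedy_eq (hM : IsPlaneTree n M) (hval : IsValid P comp M) (hgp : GP P comp M) :
    greedyMatching P comp n = M := by
  have h := (greedy_inv hM hval hgp (2 * n) le_rfl).2.2
  ext p
  rw [greedyMatching, List.mem_toFinset, h p]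
  constructor
  · exact fun h => h.1
  · intro hp
    exact ⟨hp, (hM.1.1 p hp).2⟩


/-- A type 2 move preserves being a plane tree and strictly decreases total edge length. -/
lemma move_plane (hM : IsPlaneTree n M) (hmv : Type2Move M M') :
    IsPlaneTree n M' ∧ (∑ p ∈ M', (p.2 - p.1)) < ∑ p ∈ M, (p.2 - p.1) := by
  obtain ⟨i, j, i', j', h1, h2, h3, he1, he2, hadj, rfl⟩ := hmv
  have hb1 := hM.1.1 _ he1
  have hb2 := hM.1.1 _ he2
  simp only at hb1 hb2
  -- membership characterization of M'
  have hmem : ∀ q, q ∈ insert (i, j) (insert (i', j') ((M.erase (i, j')).erase (j, i'))) ↔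
      q = (i, j) ∨ q = (i', j') ∨ (q ∈ M ∧ q ≠ (i, j') ∧ q ≠ (j, i')) := by
    intro q
    simp only [Finset.mem_insert, Finset.mem_erase]
    tauto
  -- old edges avoid the four endpoints
  have havoid : ∀ q ∈ M, q ≠ (i, j') → q ≠ (j, i') →
      q.1 ≠ i ∧ q.1 ≠ j ∧ q.1 ≠ i' ∧ q.1 ≠ j' ∧ q.2 ≠ i ∧ q.2 ≠ j ∧ q.2 ≠ i' ∧ q.2 ≠ j' := by
    intro q hq hq1 hq2
    refine ⟨?_, ?_, ?_, ?_, ?_, ?_, ?_, ?_⟩ <;> intro h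
    · exact hq1 (mem_uniq hM.1 hq he1 (Or.inl h) (Or.inl rfl))
    · exact hq2 (mem_uniq hM.1 hq he2 (Or.inl h) (Or.inl rfl))
    · exact hq2 (mem_uniq hM.1 hq he2 (Or.inl h) (Or.inr rfl))
    · exact hq1 (mem_uniq hM.1 hq he1 (Or.inl h) (Or.inr rfl))
    · exact hq1 (mem_uniq hM.1 hq he1 (Or.inr h) (Or.inl rfl))
    · exact hq2 (mem_uniq hM.1 hq he2 (Or.inr h) (Or.inl rfl))
    · exact hq2 (mem_uniq hM.1 hq he2 (Or.inr h) (Or.inr rfl))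
    · exact hq1 (mem_uniq hM.1 hq he1 (Or.inr h) (Or.inr rfl))
  -- classification of old edges
  have hclass : ∀ q ∈ M, q ≠ (i, j') → q ≠ (j, i') →
      (q.2 < i ∨ (q.1 < i ∧ j' < q.2) ∨ (i < q.1 ∧ q.2 < j) ∨ (j < q.1 ∧ q.2 < i') ∨
       (i' < q.1 ∧ q.2 < j') ∨ j' < q.1) := by
    intro q hq hq1 hq2
    have hq12 := (hM.1.1 q hq).1
    have hav := havoid q hq hq1 hq2
    have n1 := hM.2 q hq (i, j') he1
    have n2 := hM.2 (i, j') he1 q hq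
    have n3 := hM.2 q hq (j, i') he2
    have n4 := hM.2 (j, i') he2 q hq
    have n5 : ¬ (i < q.1 ∧ q.1 < j ∧ i' < q.2 ∧ q.2 < j') := by
      intro h; exact hadj ⟨q, hq, h.1, h.2.1, h.2.2.1, h.2.2.2⟩
    simp only at n1 n2 n3 n4
    omega
  have hij_ne : (i, j) ∉ M := by
    intro h
    have := mem_uniq hM.1 h he1 (Or.inl rfl) (Or.inl rfl)
    simp only [Prod.mk.injEq] at this
    omega
  have hij'_ne : (i', j') ∉ M := by
    intro h
    have := mem_uniq hM.1 h he1 (Or.inr rfl) (Or.inr rfl)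
    simp only [Prod.mk.injEq] at this
    omega
  refine ⟨⟨⟨?_, ?_⟩, ?_⟩, ?_⟩
  · -- bounds
    intro q hq
    rw [hmem] at hq
    rcases hq with rfl | rfl | ⟨hq, -, -⟩
    · exact ⟨h1, by omega⟩
    · exact ⟨h3, by omega⟩
    · exact hM.1.1 q hq
  · -- existence and uniqueness
    intro k hk
    obtain ⟨p₀, ⟨hp₀, hk₀⟩, -⟩ := hM.1.2 k hk
    by_cases hki : k = i
    · rw [hki]
      refine ⟨(i, j), ⟨(hmem _).mpr (Or.inl rfl), Or.inl rfl⟩, ?_⟩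
      rintro q ⟨hq, hqk⟩
      rw [hmem] at hq
      rcases hq with rfl | rfl | ⟨hqM, hq1, hq2⟩
      · rfl
      · simp only at hqk; omega
      · exfalso
        exact hq1 (mem_uniq hM.1 hqM he1 hqk (Or.inl rfl))
    by_cases hkj : k = j
    · rw [hkj]
      refine ⟨(i, j), ⟨(hmem _).mpr (Or.inl rfl), Or.inr rfl⟩, ?_⟩
      rintro q ⟨hq, hqk⟩
      rw [hmem] at hq
      rcases hq with rfl | rfl | ⟨hqM, hq1, hq2⟩
      · rfl
      · simp only at hqk; omega
      · exfalso
        exact hq2 (mem_uniq hM.1 hqM he2 hqk (Or.inl rfl))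
    by_cases hki' : k = i'
    · rw [hki']
      refine ⟨(i', j'), ⟨(hmem _).mpr (Or.inr (Or.inl rfl)), Or.inl rfl⟩, ?_⟩
      rintro q ⟨hq, hqk⟩
      rw [hmem] at hq
      rcases hq with rfl | rfl | ⟨hqM, hq1, hq2⟩
      · simp only at hqk; omega
      · rfl
      · exfalso
        exact hq2 (mem_uniq hM.1 hqM he2 hqk (Or.inr rfl))
    by_cases hkj' : k = j'
    · rw [hkj']
      refine ⟨(i', j'), ⟨(hmem _).mpr (Or.inr (Or.inl rfl)), Or.inr rfl⟩, ?_⟩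
      rintro q ⟨hq, hqk⟩
      rw [hmem] at hq
      rcases hq with rfl | rfl | ⟨hqM, hq1, hq2⟩
      · simp only at hqk; omega
      · rfl
      · exfalso
        exact hq1 (mem_uniq hM.1 hqM he1 hqk (Or.inr rfl))
    · -- k is none of the four
      have hp₀1 : p₀ ≠ (i, j') := by
        rintro rfl
        simp only at hk₀; omega
      have hp₀2 : p₀ ≠ (j, i') := by
        rintro rfl
        simp only at hk₀; omega
      refine ⟨p₀, ⟨(hmem _).mpr (Or.inr (Or.inr ⟨hp₀, hp₀1, hp₀2⟩)), hk₀⟩, ?_⟩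
      rintro q ⟨hq, hqk⟩
      rw [hmem] at hq
      rcases hq with rfl | rfl | ⟨hqM, hq1, hq2⟩
      · simp only at hqk; omega
      · simp only at hqk; omega
      · exact mem_uniq hM.1 hqM hp₀ hqk hk₀
  · -- non-crossing
    intro p hp q hq
    rw [hmem] at hp hq
    rcases hp with rfl | rfl | ⟨hpM, hp1, hp2⟩ <;>
      rcases hq with rfl | rfl | ⟨hqM, hq1, hq2⟩
    · simp only; omega
    · simp only; omega
    · have := hclass q hqM hq1 hq2; simp only; omega
    · simp only; omega
    · simp only; omega
    · have := hclass q hqM hq1 hq2; simp only; omega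
    · have := hclass p hpM hp1 hp2; simp only; omega
    · have := hclass p hpM hp1 hp2; simp only; omega
    · exact hM.2 p hpM q hqM
  · -- potential decreases
    have he2' : (j, i') ∈ M.erase (i, j') := by
      rw [Finset.mem_erase]
      refine ⟨?_, he2⟩
      simp only [Prod.mk.injEq, ne_eq]
      omega
    have hs1 : (∑ p ∈ (M.erase (i, j')).erase (j, i'), (p.2 - p.1)) + (i' - j)
        = ∑ p ∈ M.erase (i, j'), (p.2 - p.1) := Finset.sum_erase_add _ _ he2'
    have hs2 : (∑ p ∈ M.erase (i, j'), (p.2 - p.1)) + (j' - i)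
        = ∑ p ∈ M, (p.2 - p.1) := Finset.sum_erase_add _ _ he1
    have hni : (i', j') ∉ (M.erase (i, j')).erase (j, i') := by
      intro h
      exact hij'_ne (Finset.mem_of_mem_erase (Finset.mem_of_mem_erase h))
    have hni2 : (i, j) ∉ insert (i', j') ((M.erase (i, j')).erase (j, i')) := by
      rw [Finset.mem_insert]
      rintro (h | h)
      · simp only [Prod.mk.injEq] at h; omega
      · exact hij_ne (Finset.mem_of_mem_erase (Finset.mem_of_mem_erase h))
    rw [Finset.sum_insert hni2, Finset.sum_insert hni]
    simp only
    omega

/-- From any valid plane tree one can descend to a sink. -/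
lemma descend (hM : IsPlaneTree n M) (hval : IsValid P comp M) :
    ∃ N, IsPlaneTree n N ∧ IsValid P comp N ∧
      Relation.ReflTransGen (fun X Y => ValidType2Move P comp X Y) M N ∧
      ¬ ∃ N', ValidType2Move P comp N N' := by
  generalize hm : (∑ p ∈ M, (p.2 - p.1)) = m
  induction m using Nat.strong_induction_on generalizing M with
  | _ m ih =>
    by_cases hs : ∃ M', ValidType2Move P comp M M'
    · obtain ⟨M', hmv⟩ := hs
      obtain ⟨hpl, hlt⟩ := move_plane hM hmv.1
      obtain ⟨N, hN1, hN2, hN3, hN4⟩ := ih _ (by omega : (∑ p ∈ M', (p.2 - p.1)) < m)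
        hpl hmv.2.2 rfl
      exact ⟨N, hN1, hN2, Relation.ReflTransGen.head hmv hN3, hN4⟩
    · exact ⟨M, hM, hval, Relation.ReflTransGen.refl, hs⟩

end Aux

/-- In the directed graph `G_P⁺` (vertices the `P`-valid plane
trees, directed edges the valid type 2 local moves), the greedy tree `T₀` is
the unique sink, and every `P`-valid plane tree has a directed path of type 2
moves to `T₀`. -/
theorem greedy_tree_unique_sink {A : Type*} [DecidableEq A]
    (comp : A → A) (hinv : Function.Involutive comp) (hff : ∀ a, comp a ≠ a)
    (n : ℕ) (P : ℕ → A)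
    (hex : ∃ M, IsPlaneTree n M ∧ IsValid P comp M) :
    (∀ M : Finset (ℕ × ℕ), IsPlaneTree n M → IsValid P comp M →
      ((¬ ∃ M', ValidType2Move P comp M M') ↔ M = greedyMatching P comp n)) ∧
    (∀ M : Finset (ℕ × ℕ), IsPlaneTree n M → IsValid P comp M →
      Relation.ReflTransGen (fun X Y => ValidType2Move P comp X Y)
        M (greedyMatching P comp n)) := by
  obtain ⟨M₀, hM₀, hv₀⟩ := hex
  obtain ⟨N, hN, hvN, -, hsink⟩ := descend hM₀ hv₀
  have hgN : greedyMatching P comp n = N := greedy_eq hN hvN (gp_of_sink hinv hsink hvN)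
  constructor
  · intro M hMpt hMv
    constructor
    · intro hs
      exact (greedy_eq hMpt hMv (gp_of_sink hinv hs hMv)).symm
    · rintro rfl
      rw [hgN]
      exact hsink
  · intro M hMpt hMv
    obtain ⟨N', hN', hvN', hpath, hsink'⟩ := descend hMpt hMv
    have : greedyMatching P comp n = N' := greedy_eq hN' hvN' (gp_of_sink hinv hsink' hvN')
    rw [this]
    exact hpath
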